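/- For all reals δ, Δ with 0 < δ ≤ Δ ≤ 1, one has δ + 1 − Δ + (1/8)·(Δ² − δ²) + (δ²/4)·log(Δ/δ) + (1 − δ/2)·(Δ − δ) ≥ 1. -/

import Mathlib

/-- In the low-penalty regime, the expected energy consumption factor is at
least `1` (proved inside Claim 1 of the appendix, toward Lemma V.1). -/
theorem energy_consumption_factor_ge_one (δ Δ : ℝ)
    (hδ : 0 < δ) (hδΔ : δ ≤ Δ) (hΔ : Δ ≤ 1) :
    δ + 1 - Δ + (1 / 8) * (Δ ^ 2 - δ ^ 2) + (δ ^ 2 / 4) * Real.log (Δ / δ) +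
      (1 - δ / 2) * (Δ - δ) ≥ 1 := by
  have hΔ0 : 0 < Δ := lt_of_lt_of_le hδ hδΔ
  set g : ℝ → ℝ := fun t => (t ^ 2 - δ ^ 2) / 8 - δ * (t - δ) / 2
      + (δ ^ 2 / 4) * Real.log t with hg
  have hder : ∀ t : ℝ, 0 < t →
      HasDerivAt g (t / 4 - δ / 2 + (δ ^ 2 / 4) * t⁻¹) t := by
    intro t ht
    have h1 : HasDerivAt (fun t : ℝ => (t ^ 2 - δ ^ 2) / 8 - δ * (t - δ) / 2)
        (t / 4 - δ / 2) t := by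
      have : HasDerivAt (fun t : ℝ => (t ^ 2 - δ ^ 2) / 8 - δ * (t - δ) / 2)
          (((2 : ℕ) : ℝ) * t ^ 1 / 8 - δ * 1 / 2) t := (((hasDerivAt_pow 2 t).sub_const (δ ^ 2)).div_const 8).sub
        ((((hasDerivAt_id t).sub_const δ).const_mul δ).div_const 2)
      convert this using 1
      ring
    have h2 : HasDerivAt (fun t : ℝ => (δ ^ 2 / 4) * Real.log t)
        ((δ ^ 2 / 4) * t⁻¹) t := (Real.hasDerivAt_log ht.ne').const_mul _
    exact h1.add h2
  have hmono : MonotoneOn g (Set.Icc δ Δ) := by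
    apply monotoneOn_of_deriv_nonneg (convex_Icc _ _)
    · intro t ht
      exact ((hder t (lt_of_lt_of_le hδ ht.1)).continuousAt).continuousWithinAt
    · intro t ht
      rw [interior_Icc] at ht
      exact ((hder t (lt_trans hδ ht.1)).differentiableAt).differentiableWithinAt
    · intro t ht
      rw [interior_Icc] at ht
      have ht0 : 0 < t := lt_trans hδ ht.1
      rw [(hder t ht0).deriv]
      have : t / 4 - δ / 2 + (δ ^ 2 / 4) * t⁻¹ = (t - δ) ^ 2 / (4 * t) := by
        field_simp
        ring
      rw [this]
      positivity
  have hkey : g δ ≤ g Δ :=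
    hmono (Set.left_mem_Icc.2 hδΔ) (Set.right_mem_Icc.2 hδΔ) hδΔ
  have hlog : Real.log (Δ / δ) = Real.log Δ - Real.log δ :=
    Real.log_div hΔ0.ne' hδ.ne'
  simp only [hg] at hkey
  rw [hlog]
  nlinarith [hkey]
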